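/- Let E₀ : [0,∞) → ℝ be convex and differentiable with E₀(0) = 0, and suppose R > 0 is such that there is a unique ρ* > 0 with E₀(ρ*) = ρ*·R and E₀(ρ)/ρ strictly increasing. Then inf_{α>0} (1/α)·sup_{ρ≥0} [ρ(α+1)R − E₀(ρ)] = ρ*·R = E₀(ρ*). -/

import Mathlib

/-- parametric identity for the uncertainty-focusing bound: If `E₀` is
convex and differentiable on `[0,∞)` with `E₀(0) = 0`, `E₀'(0) < R < sup_ρ E₀'(ρ)`,
`E₀(ρ)/ρ` strictly increasing, and `ρ* > 0` is the unique positive root of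
`E₀(ρ) = ρR`, then `inf_{α>0} (1/α)·sup_{ρ≥0}[ρ(α+1)R − E₀(ρ)] = ρ*·R = E₀(ρ*)`. -/
theorem uncertainty_focusing_parametric (E0 : ℝ → ℝ)
    (hconv : ConvexOn ℝ (Set.Ici (0 : ℝ)) E0)
    (hdiff : ∀ ρ : ℝ, 0 ≤ ρ → DifferentiableAt ℝ E0 ρ)
    (h0 : E0 0 = 0)
    (R : ℝ) (hR : 0 < R)
    (hlow : deriv E0 0 < R)
    (hhigh : ∃ ρ : ℝ, 0 ≤ ρ ∧ R < deriv E0 ρ)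
    (hmono : StrictMonoOn (fun ρ => E0 ρ / ρ) (Set.Ioi (0 : ℝ)))
    (ρs : ℝ) (hρs : 0 < ρs) (heq : E0 ρs = ρs * R)
    (huniq : ∀ ρ : ℝ, 0 < ρ → E0 ρ = ρ * R → ρ = ρs) :
    IsGLB {z : ℝ | ∃ α : ℝ, 0 < α ∧ ∃ b : ℝ,
        IsLUB {w : ℝ | ∃ ρ : ℝ, 0 ≤ ρ ∧ w = ρ * (α + 1) * R - E0 ρ} b ∧ z = b / α}
      (ρs * R)
    ∧ ρs * R = E0 ρs := by
  set d := deriv E0 ρs with hd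
  -- tangent line inequality at ρs
  have htan : ∀ ρ : ℝ, 0 ≤ ρ → E0 ρs + d * (ρ - ρs) ≤ E0 ρ := by
    intro ρ hρ
    rcases lt_trichotomy ρ ρs with h | h | h
    · have hs := hconv.slope_le_deriv (Set.mem_Ici.2 hρ) (Set.mem_Ici.2 hρs.le) h
        (hdiff ρs hρs.le)
      rw [slope_def_field, ← hd] at hs
      have hpos : 0 < ρs - ρ := by linarith
      have : E0 ρs - E0 ρ ≤ d * (ρs - ρ) := (div_le_iff₀ hpos).1 hs
      nlinarith
    · simp [h]
    · have hs := hconv.deriv_le_slope (Set.mem_Ici.2 hρs.le) (Set.mem_Ici.2 hρ) h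
        (hdiff ρs hρs.le)
      rw [slope_def_field, ← hd] at hs
      have hpos : 0 < ρ - ρs := by linarith
      have : d * (ρ - ρs) ≤ E0 ρ - E0 ρs := (le_div_iff₀ hpos).1 hs
      linarith
  -- R < d
  have hdR : R < d := by
    have hhalf : (0:ℝ) < ρs / 2 := by linarith
    have hlt : E0 (ρs / 2) / (ρs / 2) < E0 ρs / ρs :=
      hmono (Set.mem_Ioi.2 hhalf) (Set.mem_Ioi.2 hρs) (by linarith)
    have hEr : E0 ρs / ρs = R := by rw [heq]; field_simp
    have h1 : E0 (ρs / 2) < (ρs / 2) * R := by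
      rw [hEr] at hlt
      calc E0 (ρs / 2) = E0 (ρs / 2) / (ρs / 2) * (ρs / 2) := by field_simp
        _ < R * (ρs / 2) := by exact mul_lt_mul_of_pos_right hlt hhalf
        _ = (ρs / 2) * R := by ring
    have h2 := htan (ρs / 2) hhalf.le
    nlinarith
  set α := d / R - 1 with hαdef
  have hα : 0 < α := by
    have h1 : 1 < d / R := (one_lt_div hR).2 hdR
    rw [hαdef]; linarith
  have hαR : (α + 1) * R = d := by rw [hαdef]; field_simp; ring
  set b := α * (ρs * R) with hb
  have hbval : ρs * (α + 1) * R - E0 ρs = b := by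
    rw [heq]; nlinarith [hαR]
  have hLUB : IsLUB {w : ℝ | ∃ ρ : ℝ, 0 ≤ ρ ∧ w = ρ * (α + 1) * R - E0 ρ} b := by
    constructor
    · rintro w ⟨ρ, hρ, rfl⟩
      have ht := htan ρ hρ
      have : ρ * (α + 1) * R - E0 ρ ≤ ρs * (α + 1) * R - E0 ρs := by nlinarith [hαR]
      linarith [hbval, this]
    · intro ub hub
      have : b ∈ {w : ℝ | ∃ ρ : ℝ, 0 ≤ ρ ∧ w = ρ * (α + 1) * R - E0 ρ} :=
        ⟨ρs, hρs.le, hbval.symm⟩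
      exact hub this
  have hmem : ρs * R ∈ {z : ℝ | ∃ α : ℝ, 0 < α ∧ ∃ b : ℝ,
      IsLUB {w : ℝ | ∃ ρ : ℝ, 0 ≤ ρ ∧ w = ρ * (α + 1) * R - E0 ρ} b ∧ z = b / α} := by
    exact ⟨α, hα, b, hLUB, by rw [hb]; field_simp⟩
  have hlb : ∀ z ∈ {z : ℝ | ∃ α : ℝ, 0 < α ∧ ∃ b : ℝ,
      IsLUB {w : ℝ | ∃ ρ : ℝ, 0 ≤ ρ ∧ w = ρ * (α + 1) * R - E0 ρ} b ∧ z = b / α},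
      ρs * R ≤ z := by
    rintro z ⟨α', hα', b', hLUB', rfl⟩
    have hin : ρs * (α' + 1) * R - E0 ρs ∈
        {w : ℝ | ∃ ρ : ℝ, 0 ≤ ρ ∧ w = ρ * (α' + 1) * R - E0 ρ} := ⟨ρs, hρs.le, rfl⟩
    have hle := hLUB'.1 hin
    have : α' * (ρs * R) ≤ b' := by rw [heq] at hle; nlinarith
    rw [le_div_iff₀ hα']
    nlinarith
  exact ⟨IsLeast.isGLB ⟨hmem, hlb⟩, heq.symm⟩
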